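/- For every k ≥ 2 there exists an invertible F_2-linear map L : F_2^{2^k−1} → F_2^{2^k−1} such that the function g = f_k ∘ L satisfies s(g) ≥ √(sparsity(g))/2 − 1, i.e., 2·(s(g) + 1) ≥ √(sparsity(g)). -/

import Mathlib

open scoped Classical

/-- Pointwise XOR of Boolean vectors. -/
def bxor {n : ℕ} (x y : Fin n → Bool) : Fin n → Bool := fun i => Bool.xor (x i) (y i)

/-- Indicator vector of a set of coordinates. -/
def eB {n : ℕ} (B : Finset (Fin n)) : Fin n → Bool := fun i => decide (i ∈ B)

/-- Standard basis vector. -/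
def eI {n : ℕ} (i : Fin n) : Fin n → Bool := fun j => decide (j = i)

/-- Sensitivity of `f` at `a`. -/
def sensAt {n : ℕ} (f : (Fin n → Bool) → Bool) (a : Fin n → Bool) : ℕ :=
  (Finset.univ.filter fun i : Fin n => f (bxor a (eI i)) ≠ f a).card

/-- Sensitivity of `f`. -/
def sens {n : ℕ} (f : (Fin n → Bool) → Bool) : ℕ :=
  Finset.univ.sup fun a : Fin n → Bool => sensAt f a

/-- Block sensitivity of `f` at `a`: the largest number of pairwise disjoint nonempty
sensitive blocks. -/
def bsAt {n : ℕ} (f : (Fin n → Bool) → Bool) (a : Fin n → Bool) : ℕ :=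
  Finset.univ.sup fun S : Finset (Finset (Fin n)) =>
    if (∀ B ∈ S, B.Nonempty ∧ f (bxor a (eB B)) ≠ f a) ∧
       (∀ B ∈ S, ∀ C ∈ S, B ≠ C → Disjoint B C)
    then S.card else 0

/-- Block sensitivity of `f`. -/
def bs {n : ℕ} (f : (Fin n → Bool) → Bool) : ℕ :=
  Finset.univ.sup fun a : Fin n → Bool => bsAt f a

/-- `x` is a monotone chain `0^n = x^0 ≺ x^1 ≺ ⋯ ≺ x^n = 1^n` in the Boolean cube
(each step strictly increases, hence flips exactly one coordinate from 0 to 1). -/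
def IsChainOn {n : ℕ} (x : Fin (n + 1) → Fin n → Bool) : Prop :=
  x 0 = (fun _ => false) ∧ x (Fin.last n) = (fun _ => true) ∧
    ∀ i : Fin n, (∀ j, x i.castSucc j ≤ x i.succ j) ∧ x i.castSucc ≠ x i.succ

/-- Alternation of `f` along a chain `x`. -/
def altChain {n : ℕ} (f : (Fin n → Bool) → Bool) (x : Fin (n + 1) → Fin n → Bool) : ℕ :=
  (Finset.univ.filter fun i : Fin n => f (x i.succ) ≠ f (x i.castSucc)).card

/-- Alternation of `f`: maximal alternation along a chain. -/
noncomputable def altF {n : ℕ} (f : (Fin n → Bool) → Bool) : ℕ :=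
  Finset.univ.sup fun x : Fin (n + 1) → Fin n → Bool =>
    if IsChainOn x then altChain f x else 0

/-- Shift-invariant alternation: minimum alternation over all shifts of `f`. -/
noncomputable def saltF {n : ℕ} (f : (Fin n → Bool) → Bool) : ℕ :=
  (Finset.univ : Finset (Fin n → Bool)).inf' Finset.univ_nonempty
    fun b => altF fun x => f (bxor x b)
/-- The recursively defined decision-tree function family: `fTree 1 = id` on one bit, and
`fTree (k+1) (b, z, z') = fTree k z` if `b = 0`, `fTree k z'` if `b = 1`
(layout: bit 0 is `b`, bits `1..2^k-1` are `z`, bits `2^k..2^(k+1)-2` are `z'`). -/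
def fTree : (k : ℕ) → (Fin (2 ^ k - 1) → Bool) → Bool
  | 0, _ => false
  | 1, x => x ⟨0, by norm_num⟩
  | (k + 2), x =>
    if x ⟨0, by have h : (1:ℕ) < 2 ^ (k + 2) := Nat.one_lt_two_pow_iff.mpr (by omega); omega⟩ then
      fTree (k + 1) (fun j => x ⟨j.1 + 2 ^ (k + 1), by
        have hj := j.isLt
        have h1 : 0 < 2 ^ (k + 1) := by positivity
        have h2 : 2 ^ (k + 2) = 2 ^ (k + 1) * 2 := pow_succ 2 (k + 1)
        omega⟩)
    else
      fTree (k + 1) (fun j => x ⟨j.1 + 1, by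
        have hj := j.isLt
        have h1 : 0 < 2 ^ (k + 1) := by positivity
        have h2 : 2 ^ (k + 2) = 2 ^ (k + 1) * 2 := pow_succ 2 (k + 1)
        omega⟩)

/-- View a Boolean vector as a vector over `F_2`. -/
def b2z {n : ℕ} (x : Fin n → Bool) : Fin n → ZMod 2 := fun i => if x i then 1 else 0

/-- View a vector over `F_2` as a Boolean vector. -/
def z2b {n : ℕ} (x : Fin n → ZMod 2) : Fin n → Bool := fun i => decide (x i = 1)

/-- The `±1` version `(-1)^g` of a Boolean function. -/
noncomputable def toPM {n : ℕ} (g : (Fin n → Bool) → Bool) (x : Fin n → Bool) : ℝ :=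
  if g x then -1 else 1

/-- Fourier coefficient of `(-1)^g` at `S ⊆ [n]`:
`Ĝ(S) = 2^{-n} Σ_x (-1)^{g(x)} (-1)^{Σ_{i ∈ S} x_i}`. -/
noncomputable def fourierCf {n : ℕ} (g : (Fin n → Bool) → Bool) (S : Finset (Fin n)) : ℝ :=
  (2 ^ n : ℝ)⁻¹ * ∑ x : Fin n → Bool, toPM g x * ∏ i ∈ S, (if x i then (-1 : ℝ) else 1)

/-- Fourier sparsity: the number of nonzero Fourier coefficients of `(-1)^g`. -/
noncomputable def sparsity {n : ℕ} (g : (Fin n → Bool) → Bool) : ℕ :=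
  (Finset.univ.filter fun S : Finset (Fin n) => fourierCf g S ≠ 0).card

lemma size2 (k : ℕ) : 2 ^ (k+2) - 1 = (2^(k+1) - 1) + (2^(k+1) - 1) + 1 := by
  have h1 : 0 < 2 ^ (k + 1) := by positivity
  have h2 : 2 ^ (k + 2) = 2 ^ (k + 1) * 2 := pow_succ 2 (k + 1)
  omega

lemma size_pos (k : ℕ) : 0 < 2 ^ (k+1) - 1 := by
  have h2 : 2 ^ (k + 1) = 2 ^ k * 2 := pow_succ 2 k
  have h1 : 0 < 2 ^ k := by positivity
  omega

def rt (k : ℕ) : Fin (2^(k+2) - 1) := ⟨0, by have := size2 k; have := size_pos k; omega⟩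

def embL (k : ℕ) (j : Fin (2^(k+1) - 1)) : Fin (2^(k+2) - 1) :=
  ⟨j.1 + 1, by have := size2 k; have := j.isLt; omega⟩

def embR (k : ℕ) (j : Fin (2^(k+1) - 1)) : Fin (2^(k+2) - 1) :=
  ⟨j.1 + 2^(k+1), by have := size2 k; have := j.isLt; have := size_pos k; omega⟩

lemma fTree_succ (k : ℕ) (x : Fin (2^(k+2) - 1) → Bool) :
    fTree (k+2) x = if x (rt k) then fTree (k+1) (x ∘ embR k) else fTree (k+1) (x ∘ embL k) := rfl

lemma embL_inj (k : ℕ) : Function.Injective (embL k) := by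
  intro a b h; apply Fin.ext; have := Fin.mk.injEq .. ▸ h; simpa [embL, Fin.ext_iff] using h

lemma embR_inj (k : ℕ) : Function.Injective (embR k) := by
  intro a b h; apply Fin.ext; simpa [embR, Fin.ext_iff] using h

lemma embL_ne_embR (k : ℕ) (i j : Fin (2^(k+1)-1)) : embL k i ≠ embR k j := by
  have := i.isLt; have := j.isLt
  simp only [embL, embR, Fin.ext_iff, ne_eq]; omega

lemma embL_ne_rt (k : ℕ) (i : Fin (2^(k+1)-1)) : embL k i ≠ rt k := by
  simp [embL, rt, Fin.ext_iff]

lemma embR_ne_rt (k : ℕ) (i : Fin (2^(k+1)-1)) : embR k i ≠ rt k := by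
  have := size_pos k
  simp only [embR, rt, Fin.ext_iff, ne_eq]; omega

lemma index_cases (k : ℕ) (i : Fin (2^(k+2) - 1)) :
    i = rt k ∨ (∃ j, i = embL k j) ∨ (∃ j, i = embR k j) := by
  have hi := i.isLt
  have hs := size2 k
  rcases Nat.lt_or_ge i.1 1 with h | h
  · left; apply Fin.ext; simp [rt]; omega
  rcases Nat.lt_or_ge i.1 (2^(k+1)) with h2 | h2
  · right; left; exact ⟨⟨i.1 - 1, by omega⟩, by apply Fin.ext; simp [embL]; omega⟩
  · right; right; exact ⟨⟨i.1 - 2^(k+1), by omega⟩, by apply Fin.ext; simp [embR]; omega⟩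

def leafSum : (k : ℕ) → (Fin (2^k - 1) → ZMod 2) → ZMod 2
  | 0, _ => 0
  | 1, x => x ⟨0, by norm_num⟩
  | (k+2), x => leafSum (k+1) (x ∘ embL k) + leafSum (k+1) (x ∘ embR k)

def Lfun : (k : ℕ) → (Fin (2^k - 1) → ZMod 2) → Fin (2^k - 1) → ZMod 2
  | 0, x => x
  | 1, x => x
  | (k+2), x => fun i =>
      if h0 : i.1 = 0 then x i + leafSum (k+1) (x ∘ embR k)
      else if h1 : i.1 < 2^(k+1) then
        Lfun (k+1) (x ∘ embL k) ⟨i.1 - 1, by have := i.isLt; have := size2 k; omega⟩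
      else
        Lfun (k+1) (x ∘ embR k) ⟨i.1 - 2^(k+1), by have := i.isLt; have := size2 k; omega⟩

lemma Lfun_rt (k : ℕ) (x : Fin (2^(k+2)-1) → ZMod 2) :
    Lfun (k+2) x (rt k) = x (rt k) + leafSum (k+1) (x ∘ embR k) := by
  simp [Lfun, rt]

lemma Lfun_embL (k : ℕ) (x : Fin (2^(k+2)-1) → ZMod 2) (j : Fin (2^(k+1)-1)) :
    Lfun (k+2) x (embL k j) = Lfun (k+1) (x ∘ embL k) j := by
  have hj := j.isLt
  have h0 : (embL k j).1 = j.1 + 1 := rfl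
  simp only [Lfun]
  rw [dif_neg (show ¬ (embL k j).1 = 0 by omega)]
  rw [dif_pos (show (embL k j).1 < 2^(k+1) by omega)]
  refine congrArg _ (Fin.ext ?_)
  show (embL k j).1 - 1 = j.1
  omega

lemma Lfun_embR (k : ℕ) (x : Fin (2^(k+2)-1) → ZMod 2) (j : Fin (2^(k+1)-1)) :
    Lfun (k+2) x (embR k j) = Lfun (k+1) (x ∘ embR k) j := by
  have hj := j.isLt
  have hp := size_pos k
  have h0 : (embR k j).1 = j.1 + 2^(k+1) := rfl
  simp only [Lfun]
  rw [dif_neg (show ¬ (embR k j).1 = 0 by omega)]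
  rw [dif_neg (show ¬ (embR k j).1 < 2^(k+1) by omega)]
  refine congrArg _ (Fin.ext ?_)
  show (embR k j).1 - 2^(k+1) = j.1
  omega

lemma Lfun_comp_embL (k : ℕ) (x : Fin (2^(k+2)-1) → ZMod 2) :
    (Lfun (k+2) x) ∘ embL k = Lfun (k+1) (x ∘ embL k) := funext fun j => Lfun_embL k x j

lemma Lfun_comp_embR (k : ℕ) (x : Fin (2^(k+2)-1) → ZMod 2) :
    (Lfun (k+2) x) ∘ embR k = Lfun (k+1) (x ∘ embR k) := funext fun j => Lfun_embR k x j

lemma leafSum_add : ∀ (k : ℕ) (x y : Fin (2^k - 1) → ZMod 2),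
    leafSum k (x + y) = leafSum k x + leafSum k y
  | 0, x, y => by simp [leafSum]
  | 1, x, y => by simp [leafSum]
  | (k+2), x, y => by
      have h1 := leafSum_add (k+1) (x ∘ embL k) (y ∘ embL k)
      have h2 := leafSum_add (k+1) (x ∘ embR k) (y ∘ embR k)
      simp only [leafSum]
      have e1 : (x + y) ∘ embL k = x ∘ embL k + y ∘ embL k := rfl
      have e2 : (x + y) ∘ embR k = x ∘ embR k + y ∘ embR k := rfl
      rw [e1, e2, h1, h2]; ring

lemma leafSum_zero : ∀ (k : ℕ), leafSum k 0 = 0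
  | 0 => rfl
  | 1 => rfl
  | (k+2) => by
      simp only [leafSum]
      have e1 : (0 : Fin (2^(k+2)-1) → ZMod 2) ∘ embL k = 0 := rfl
      have e2 : (0 : Fin (2^(k+2)-1) → ZMod 2) ∘ embR k = 0 := rfl
      rw [e1, e2, leafSum_zero (k+1)]; ring

lemma Lfun_add : ∀ (k : ℕ) (x y : Fin (2^k - 1) → ZMod 2),
    Lfun k (x + y) = Lfun k x + Lfun k y
  | 0, x, y => rfl
  | 1, x, y => rfl
  | (k+2), x, y => by
      funext i
      rcases index_cases k i with rfl | ⟨j, rfl⟩ | ⟨j, rfl⟩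
      · simp only [Pi.add_apply, Lfun_rt]
        have e2 : (x + y) ∘ embR k = x ∘ embR k + y ∘ embR k := rfl
        rw [e2, leafSum_add]; ring
      · simp only [Pi.add_apply, Lfun_embL]
        have e1 : (x + y) ∘ embL k = x ∘ embL k + y ∘ embL k := rfl
        rw [e1, Lfun_add (k+1)]; rfl
      · simp only [Pi.add_apply, Lfun_embR]
        have e2 : (x + y) ∘ embR k = x ∘ embR k + y ∘ embR k := rfl
        rw [e2, Lfun_add (k+1)]; rfl

lemma leafSum_Lfun : ∀ (k : ℕ) (x : Fin (2^k - 1) → ZMod 2),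
    leafSum k (Lfun k x) = leafSum k x
  | 0, x => rfl
  | 1, x => rfl
  | (k+2), x => by
      simp only [leafSum, Lfun_comp_embL, Lfun_comp_embR,
        leafSum_Lfun (k+1) (x ∘ embL k), leafSum_Lfun (k+1) (x ∘ embR k)]

lemma Lfun_invol : ∀ (k : ℕ) (x : Fin (2^k - 1) → ZMod 2),
    Lfun k (Lfun k x) = x
  | 0, x => rfl
  | 1, x => rfl
  | (k+2), x => by
      funext i
      rcases index_cases k i with rfl | ⟨j, rfl⟩ | ⟨j, rfl⟩
      · rw [Lfun_rt, Lfun_rt, Lfun_comp_embR, leafSum_Lfun]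
        have : ∀ a b : ZMod 2, a + b + b = a := by decide
        exact this _ _
      · rw [Lfun_embL, Lfun_comp_embL, Lfun_invol (k+1)]; rfl
      · rw [Lfun_embR, Lfun_comp_embR, Lfun_invol (k+1)]; rfl

lemma Lfun_zero (k : ℕ) : Lfun k 0 = 0 := by
  have := Lfun_add k 0 0
  simpa using this

noncomputable def Lequiv (k : ℕ) :
    (Fin (2^k - 1) → ZMod 2) ≃ₗ[ZMod 2] (Fin (2^k - 1) → ZMod 2) where
  toFun := Lfun k
  invFun := Lfun k
  left_inv := Lfun_invol k
  right_inv := Lfun_invol k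
  map_add' := Lfun_add k
  map_smul' := by
    intro c x
    have hc : ∀ c : ZMod 2, c = 0 ∨ c = 1 := by decide
    rcases hc c with rfl | rfl
    · simp [Lfun_zero]
    · simp


def delta {n : ℕ} (ℓ : Fin n) : Fin n → ZMod 2 := fun i => if i = ℓ then 1 else 0

def embLe (k : ℕ) : Fin (2^(k+1)-1) ↪ Fin (2^(k+2)-1) := ⟨embL k, embL_inj k⟩
def embRe (k : ℕ) : Fin (2^(k+1)-1) ↪ Fin (2^(k+2)-1) := ⟨embR k, embR_inj k⟩

def leaves : (k : ℕ) → Finset (Fin (2^k - 1))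
  | 0 => ∅
  | 1 => {⟨0, by norm_num⟩}
  | (k+2) => (leaves (k+1)).map (embLe k) ∪ (leaves (k+1)).map (embRe k)

lemma leaves_disj (k : ℕ) :
    Disjoint ((leaves (k+1)).map (embLe k)) ((leaves (k+1)).map (embRe k)) := by
  rw [Finset.disjoint_left]
  rintro a ha hb
  rw [Finset.mem_map] at ha hb
  obtain ⟨i, _, rfl⟩ := ha
  obtain ⟨j, _, hj⟩ := hb
  exact embL_ne_embR k i j hj.symm

lemma card_leaves : ∀ k : ℕ, (leaves (k+1)).card = 2^k
  | 0 => rfl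
  | (k+1) => by
    show ((leaves (k+1)).map (embLe k) ∪ (leaves (k+1)).map (embRe k)).card = 2^(k+1)
    rw [Finset.card_union_of_disjoint (leaves_disj k), Finset.card_map, Finset.card_map,
      card_leaves k]
    ring

lemma delta_embL_embL (k : ℕ) (j : Fin (2^(k+1)-1)) :
    (delta (embL k j)) ∘ embL k = delta j := by
  funext i
  simp only [delta, Function.comp_apply]
  by_cases h : i = j
  · subst h; simp
  · rw [if_neg (fun he => h (embL_inj k he)), if_neg h]

lemma delta_embL_embR (k : ℕ) (j : Fin (2^(k+1)-1)) :
    (delta (embL k j)) ∘ embR k = 0 := by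
  funext i
  simp only [delta, Function.comp_apply]
  rw [if_neg (fun he => embL_ne_embR k j i he.symm)]; rfl

lemma delta_embR_embR (k : ℕ) (j : Fin (2^(k+1)-1)) :
    (delta (embR k j)) ∘ embR k = delta j := by
  funext i
  simp only [delta, Function.comp_apply]
  by_cases h : i = j
  · subst h; simp
  · rw [if_neg (fun he => h (embR_inj k he)), if_neg h]

lemma delta_embR_embL (k : ℕ) (j : Fin (2^(k+1)-1)) :
    (delta (embR k j)) ∘ embL k = 0 := by
  funext i
  simp only [delta, Function.comp_apply]
  rw [if_neg (embL_ne_embR k i j)]; rfl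

lemma delta_embL_rt (k : ℕ) (j : Fin (2^(k+1)-1)) : delta (embL k j) (rt k) = 0 := by
  simp only [delta]
  rw [if_neg (fun he => embL_ne_rt k j he.symm)]

lemma delta_embR_rt (k : ℕ) (j : Fin (2^(k+1)-1)) : delta (embR k j) (rt k) = 0 := by
  simp only [delta]
  rw [if_neg (fun he => embR_ne_rt k j he.symm)]

lemma leafSum_delta : ∀ (k : ℕ), ∀ ℓ ∈ leaves (k+1), leafSum (k+1) (delta ℓ) = 1
  | 0 => by
    intro ℓ hℓ
    have : ℓ = ⟨0, by norm_num⟩ := Finset.mem_singleton.mp hℓ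
    subst this
    simp [leafSum, delta]
  | (k+1) => by
    intro ℓ hℓ
    rcases Finset.mem_union.mp hℓ with h | h
    · obtain ⟨j, hj, rfl⟩ := Finset.mem_map.mp h
      show leafSum (k+1) (delta (embL k j) ∘ embL k) + leafSum (k+1) (delta (embL k j) ∘ embR k) = 1
      rw [delta_embL_embL, delta_embL_embR, leafSum_zero, leafSum_delta k j hj]
      ring
    · obtain ⟨j, hj, rfl⟩ := Finset.mem_map.mp h
      show leafSum (k+1) (delta (embR k j) ∘ embL k) + leafSum (k+1) (delta (embR k j) ∘ embR k) = 1
      rw [delta_embR_embL, delta_embR_embR, leafSum_zero, leafSum_delta k j hj]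
      ring

lemma fTree_zero_input : ∀ k : ℕ, fTree k (fun _ => false) = false
  | 0 => rfl
  | 1 => rfl
  | (k+2) => by
    rw [fTree_succ]
    show (if false = true then _ else fTree (k+1) ((fun _ => false) ∘ embL k)) = false
    rw [if_neg (by simp)]
    exact fTree_zero_input (k+1)

lemma z2b_comp {n m : ℕ} (v : Fin n → ZMod 2) (e : Fin m → Fin n) :
    (z2b v) ∘ e = z2b (v ∘ e) := rfl

lemma key_flip : ∀ (k : ℕ), ∀ ℓ ∈ leaves (k+1),
    fTree (k+1) (z2b (Lfun (k+1) (delta ℓ))) = true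
  | 0 => by
    intro ℓ hℓ
    have : ℓ = ⟨0, by norm_num⟩ := Finset.mem_singleton.mp hℓ
    subst this
    show z2b (Lfun 1 (delta _)) ⟨0, by norm_num⟩ = true
    simp [Lfun, delta, z2b]
  | (k+1) => by
    intro ℓ hℓ
    rcases Finset.mem_union.mp hℓ with h | h
    · obtain ⟨j, hj, rfl⟩ := Finset.mem_map.mp h
      rw [fTree_succ]
      have hroot : z2b (Lfun (k+2) (delta (embLe k j))) (rt k) = false := by
        show decide (Lfun (k+2) (delta (embL k j)) (rt k) = 1) = false
        rw [Lfun_rt, delta_embL_rt, delta_embL_embR, leafSum_zero]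
        decide
      rw [hroot, if_neg (by simp)]
      rw [z2b_comp, Lfun_comp_embL]
      show fTree (k+1) (z2b (Lfun (k+1) (delta (embL k j) ∘ embL k))) = true
      rw [delta_embL_embL]
      exact key_flip k j hj
    · obtain ⟨j, hj, rfl⟩ := Finset.mem_map.mp h
      rw [fTree_succ]
      have hroot : z2b (Lfun (k+2) (delta (embRe k j))) (rt k) = true := by
        show decide (Lfun (k+2) (delta (embR k j)) (rt k) = 1) = true
        rw [Lfun_rt, delta_embR_rt, delta_embR_embR, leafSum_delta k j hj]
        decide
      rw [hroot, if_pos rfl]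
      rw [z2b_comp, Lfun_comp_embR]
      show fTree (k+1) (z2b (Lfun (k+1) (delta (embR k j) ∘ embR k))) = true
      rw [delta_embR_embR]
      exact key_flip k j hj

lemma b2z_eI {n : ℕ} (ℓ : Fin n) : b2z (eI ℓ) = delta ℓ := by
  funext i
  simp [b2z, eI, delta]

lemma b2z_zero {n : ℕ} : b2z (fun _ : Fin n => false) = 0 := by
  funext i; simp [b2z]

lemma sens_lower (k : ℕ) :
    2^k ≤ sens (fun x => fTree (k+1) (z2b (Lfun (k+1) (b2z x)))) := by
  set g : (Fin (2^(k+1)-1) → Bool) → Bool :=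
    fun x => fTree (k+1) (z2b (Lfun (k+1) (b2z x))) with hg
  have hga : g (fun _ => false) = false := by
    rw [hg]
    simp only [b2z_zero, Lfun_zero]
    have : z2b (0 : Fin (2^(k+1)-1) → ZMod 2) = fun _ => false := by
      funext i; simp [z2b]
    rw [this, fTree_zero_input]
  have hsub : leaves (k+1) ⊆
      Finset.univ.filter fun i => g (bxor (fun _ => false) (eI i)) ≠ g (fun _ => false) := by
    intro ℓ hℓ
    rw [Finset.mem_filter]
    refine ⟨Finset.mem_univ _, ?_⟩
    have hb : bxor (fun _ => false) (eI ℓ) = eI ℓ := by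
      funext i; simp [bxor]
    rw [hb, hga, hg]
    simp only [b2z_eI]
    rw [key_flip k ℓ hℓ]
    simp
  calc 2^k = (leaves (k+1)).card := (card_leaves k).symm
    _ ≤ _ := Finset.card_le_card hsub
    _ = sensAt g (fun _ => false) := rfl
    _ ≤ sens g := Finset.le_sup (Finset.mem_univ _)

noncomputable def chi (a : ZMod 2) : ℝ := if a = 1 then -1 else 1

lemma chi_zero : chi 0 = 1 := by norm_num [chi]

lemma chi_one : chi 1 = -1 := by norm_num [chi]

lemma chi_add (a b : ZMod 2) : chi (a + b) = chi a * chi b := by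
  have hc : ∀ c : ZMod 2, c = 0 ∨ c = 1 := by decide
  rcases hc a with rfl | rfl <;> rcases hc b with rfl | rfl
  · rw [add_zero, chi_zero]; ring
  · rw [zero_add, chi_zero]; ring
  · rw [add_zero, chi_zero]; ring
  · rw [show (1 : ZMod 2) + 1 = 0 by decide, chi_zero, chi_one]; ring

lemma chi_add_one (a : ZMod 2) : chi (a + 1) = - chi a := by
  rw [chi_add, chi_one]; ring

lemma prod_eq_chi {n : ℕ} (S : Finset (Fin n)) (x : Fin n → Bool) :
    (∏ i ∈ S, (if x i then (-1 : ℝ) else 1)) = chi (∑ i ∈ S, b2z x i) := by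
  induction S using Finset.cons_induction with
  | empty => simp [chi_zero]
  | cons a s ha ih =>
    rw [Finset.prod_cons, Finset.sum_cons, chi_add, ih]
    congr 1
    by_cases h : x a <;> simp [h, b2z, chi]

lemma fourierCf_chi {n : ℕ} (g : (Fin n → Bool) → Bool) (S : Finset (Fin n)) :
    fourierCf g S = (2 ^ n : ℝ)⁻¹ * ∑ x : Fin n → Bool, toPM g x * chi (∑ i ∈ S, b2z x i) := by
  unfold fourierCf
  congr 1
  exact Finset.sum_congr rfl fun x _ => by rw [prod_eq_chi]

lemma zmod2_eq01 (c : ZMod 2) : c = 0 ∨ c = 1 := by revert c; decide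

/-- additive maps commute with finite sums -/
lemma addmap_sum {α : Type*} {n m : ℕ} (M : (Fin n → ZMod 2) → (Fin m → ZMod 2))
    (hM : ∀ x y, M (x + y) = M x + M y) (hM0 : M 0 = 0)
    (s : Finset α) (v : α → Fin n → ZMod 2) :
    M (∑ j ∈ s, v j) = ∑ j ∈ s, M (v j) := by
  induction s using Finset.cons_induction with
  | empty => simpa using hM0
  | cons a t ha ih => rw [Finset.sum_cons, Finset.sum_cons, hM, ih]

/-- decompose a vector as a sum of deltas -/
lemma pi_decomp {n : ℕ} (w : Fin n → ZMod 2) :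
    w = ∑ j ∈ Finset.univ.filter (fun j => w j = 1), delta j := by
  funext p
  rw [Finset.sum_apply]
  simp only [delta]
  rw [Finset.sum_ite_eq (Finset.univ.filter (fun j => w j = 1)) p (fun _ => (1 : ZMod 2))]
  rcases zmod2_eq01 (w p) with h | h <;> simp [h]

noncomputable def dualSet {n : ℕ} (M : (Fin n → ZMod 2) → (Fin n → ZMod 2))
    (S : Finset (Fin n)) : Finset (Fin n) :=
  Finset.univ.filter fun j => (∑ i ∈ S, M (delta j) i) = 1

lemma sum_dual {n : ℕ} (M : (Fin n → ZMod 2) → (Fin n → ZMod 2))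
    (hM : ∀ x y, M (x + y) = M x + M y) (hM0 : M 0 = 0)
    (S : Finset (Fin n)) (w : Fin n → ZMod 2) :
    ∑ i ∈ S, M w i = ∑ j ∈ dualSet M S, w j := by
  conv_lhs => rw [pi_decomp w]
  rw [addmap_sum M hM hM0]
  calc ∑ i ∈ S, (∑ j ∈ Finset.univ.filter (fun j => w j = 1), M (delta j)) i
      = ∑ i ∈ S, ∑ j ∈ Finset.univ.filter (fun j => w j = 1), M (delta j) i := by
        exact Finset.sum_congr rfl fun i _ => Finset.sum_apply i _ _
    _ = ∑ j ∈ Finset.univ.filter (fun j => w j = 1), ∑ i ∈ S, M (delta j) i :=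
        Finset.sum_comm
    _ = ∑ j : Fin n, (if w j = 1 then ∑ i ∈ S, M (delta j) i else 0) :=
        Finset.sum_filter _ _
    _ = ∑ j : Fin n, (if (∑ i ∈ S, M (delta j) i) = 1 then w j else 0) := by
        refine Finset.sum_congr rfl fun j _ => ?_
        rcases zmod2_eq01 (w j) with h | h <;>
          rcases zmod2_eq01 (∑ i ∈ S, M (delta j) i) with h2 | h2 <;>
          simp [h, h2]
    _ = ∑ j ∈ dualSet M S, w j := (Finset.sum_filter _ _).symm

lemma b2z_z2b {n : ℕ} (v : Fin n → ZMod 2) : b2z (z2b v) = v := by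
  funext i
  rcases zmod2_eq01 (v i) with h | h <;> simp [b2z, z2b, h]

lemma z2b_b2z {n : ℕ} (x : Fin n → Bool) : z2b (b2z x) = x := by
  funext i
  by_cases h : x i <;> simp [b2z, z2b, h]

noncomputable def cubeEquiv {n : ℕ}
    (L : (Fin n → ZMod 2) ≃ₗ[ZMod 2] (Fin n → ZMod 2)) :
    (Fin n → Bool) ≃ (Fin n → Bool) where
  toFun x := z2b (L (b2z x))
  invFun y := z2b (L.symm (b2z y))
  left_inv x := by
    show z2b (L.symm (b2z (z2b (L (b2z x))))) = x
    rw [b2z_z2b, L.symm_apply_apply, z2b_b2z]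
  right_inv y := by
    show z2b (L (b2z (z2b (L.symm (b2z y))))) = y
    rw [b2z_z2b, L.apply_symm_apply, z2b_b2z]

lemma fourierCf_comp {n : ℕ} (f : (Fin n → Bool) → Bool)
    (L : (Fin n → ZMod 2) ≃ₗ[ZMod 2] (Fin n → ZMod 2)) (S : Finset (Fin n)) :
    fourierCf (fun x => f (z2b (L (b2z x)))) S
      = fourierCf f (dualSet (fun v => L.symm v) S) := by
  rw [fourierCf_chi, fourierCf_chi]
  congr 1
  have hsymm_add : ∀ x y : Fin n → ZMod 2, L.symm (x + y) = L.symm x + L.symm y :=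
    fun x y => map_add _ x y
  have hsymm_zero : L.symm 0 = 0 := map_zero _
  refine Fintype.sum_equiv (cubeEquiv L) _ _ fun x => ?_
  have h1 : (cubeEquiv L) x = z2b (L (b2z x)) := rfl
  rw [h1]
  congr 1
  have h2 : b2z (z2b (L (b2z x))) = L (b2z x) := b2z_z2b _
  rw [h2]
  have h3 := sum_dual (fun v => L.symm v) hsymm_add hsymm_zero S (L (b2z x))
  rw [← h3]
  congr 1
  exact Finset.sum_congr rfl fun i _ => by rw [L.symm_apply_apply]

lemma sum_delta_mem {n : ℕ} (S : Finset (Fin n)) (p : Fin n) :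
    ∑ i ∈ S, delta p i = if p ∈ S then 1 else 0 := by
  simp only [delta]
  exact Finset.sum_ite_eq' S p (fun _ => (1 : ZMod 2))

lemma dual_dual {n : ℕ} (L : (Fin n → ZMod 2) ≃ₗ[ZMod 2] (Fin n → ZMod 2))
    (S : Finset (Fin n)) :
    dualSet (fun v => L v) (dualSet (fun v => L.symm v) S) = S := by
  ext p
  have hadd : ∀ x y : Fin n → ZMod 2, L.symm (x + y) = L.symm x + L.symm y :=
    fun x y => map_add _ x y
  have h0 : L.symm 0 = 0 := map_zero _
  have key := sum_dual (fun v => L.symm v) hadd h0 S (L (delta p))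
  have hL : ∀ i, L.symm (L (delta p)) i = delta p i := fun i => by rw [L.symm_apply_apply]
  rw [Finset.sum_congr rfl (fun i _ => hL i), sum_delta_mem] at key
  simp only [dualSet] at key
  simp only [dualSet, Finset.mem_filter, Finset.mem_univ, true_and]
  rw [← key]
  by_cases h : p ∈ S <;> simp [h]

lemma sparsity_comp_le {n : ℕ} (f : (Fin n → Bool) → Bool)
    (L : (Fin n → ZMod 2) ≃ₗ[ZMod 2] (Fin n → ZMod 2)) :
    sparsity (fun x => f (z2b (L (b2z x)))) ≤ sparsity f := by
  unfold sparsity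
  refine Finset.card_le_card_of_injOn (dualSet (fun v => L.symm v)) ?_ ?_
  · intro S hS
    rw [Finset.mem_coe, Finset.mem_filter] at hS ⊢
    refine ⟨Finset.mem_univ _, ?_⟩
    rw [← fourierCf_comp f L S]
    exact hS.2
  · intro S _ S' _ h
    have := congrArg (dualSet (fun v => L v)) h
    rwa [dual_dual, dual_dual] at this

def glue {k : ℕ} (b : Bool) (z z' : Fin (2^(k+1)-1) → Bool) : Fin (2^(k+2)-1) → Bool :=
  fun i =>
    if h0 : i.1 = 0 then b
    else if h1 : i.1 < 2^(k+1) then z ⟨i.1 - 1, by have := i.isLt; have := size2 k; omega⟩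
    else z' ⟨i.1 - 2^(k+1), by have := i.isLt; have := size2 k; omega⟩

lemma glue_rt {k : ℕ} (b : Bool) (z z' : Fin (2^(k+1)-1) → Bool) :
    glue b z z' (rt k) = b := by simp [glue, rt]

lemma glue_embL {k : ℕ} (b : Bool) (z z' : Fin (2^(k+1)-1) → Bool) (j : Fin (2^(k+1)-1)) :
    glue b z z' (embL k j) = z j := by
  have hj := j.isLt
  have h0 : (embL k j).1 = j.1 + 1 := rfl
  simp only [glue]
  rw [dif_neg (show ¬ (embL k j).1 = 0 by omega),
    dif_pos (show (embL k j).1 < 2^(k+1) by omega)]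
  refine congrArg _ (Fin.ext ?_)
  show (embL k j).1 - 1 = j.1
  omega

lemma glue_embR {k : ℕ} (b : Bool) (z z' : Fin (2^(k+1)-1) → Bool) (j : Fin (2^(k+1)-1)) :
    glue b z z' (embR k j) = z' j := by
  have hj := j.isLt
  have hp := size_pos k
  have h0 : (embR k j).1 = j.1 + 2^(k+1) := rfl
  simp only [glue]
  rw [dif_neg (show ¬ (embR k j).1 = 0 by omega),
    dif_neg (show ¬ (embR k j).1 < 2^(k+1) by omega)]
  refine congrArg _ (Fin.ext ?_)
  show (embR k j).1 - 2^(k+1) = j.1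
  omega

lemma glue_comp_embL {k : ℕ} (b : Bool) (z z' : Fin (2^(k+1)-1) → Bool) :
    (glue b z z') ∘ embL k = z := funext fun j => glue_embL b z z' j

lemma glue_comp_embR {k : ℕ} (b : Bool) (z z' : Fin (2^(k+1)-1) → Bool) :
    (glue b z z') ∘ embR k = z' := funext fun j => glue_embR b z z' j

def cubeSplit (k : ℕ) :
    (Bool × (Fin (2^(k+1)-1) → Bool) × (Fin (2^(k+1)-1) → Bool)) ≃ (Fin (2^(k+2)-1) → Bool) where
  toFun p := glue p.1 p.2.1 p.2.2
  invFun x := (x (rt k), x ∘ embL k, x ∘ embR k)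
  left_inv p := by
    obtain ⟨b, z, z'⟩ := p
    show (glue b z z' (rt k), (glue b z z') ∘ embL k, (glue b z z') ∘ embR k) = (b, z, z')
    rw [glue_rt, glue_comp_embL, glue_comp_embR]
  right_inv x := by
    funext i
    show glue (x (rt k)) (x ∘ embL k) (x ∘ embR k) i = x i
    rcases index_cases k i with rfl | ⟨j, rfl⟩ | ⟨j, rfl⟩
    · rw [glue_rt]
    · rw [glue_embL]; rfl
    · rw [glue_embR]; rfl

lemma fTree_glue {k : ℕ} (b : Bool) (z z' : Fin (2^(k+1)-1) → Bool) :
    fTree (k+2) (glue b z z') = if b then fTree (k+1) z' else fTree (k+1) z := by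
  rw [fTree_succ, glue_rt, glue_comp_embL, glue_comp_embR]

lemma sum_index_split {M : Type*} [AddCommMonoid M] (k : ℕ) (w : Fin (2^(k+2)-1) → M) :
    ∑ i, w i = w (rt k) + ((∑ j, w (embL k j)) + (∑ j, w (embR k j))) := by
  classical
  have hinj : Function.Injective
      (Sum.elim (fun _ : Unit => rt k) (Sum.elim (embL k) (embR k))) := by
    rintro (a | a | a) (b | b | b) h <;> simp only [Sum.elim_inl, Sum.elim_inr] at h
    · rfl
    · exact absurd h.symm (embL_ne_rt k b)
    · exact absurd h.symm (embR_ne_rt k b)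
    · exact absurd h (embL_ne_rt k a)
    · rw [embL_inj k h]
    · exact absurd h (embL_ne_embR k a b)
    · exact absurd h (embR_ne_rt k a)
    · exact absurd h.symm (embL_ne_embR k b a)
    · rw [embR_inj k h]
  have hcard : Fintype.card (Unit ⊕ (Fin (2^(k+1)-1) ⊕ Fin (2^(k+1)-1)))
      = Fintype.card (Fin (2^(k+2)-1)) := by
    simp [size2 k]
    omega
  have hbij := (Fintype.bijective_iff_injective_and_card _).mpr ⟨hinj, hcard⟩
  have := Fintype.sum_equiv (Equiv.ofBijective _ hbij)
    (fun a => w (Sum.elim (fun _ : Unit => rt k) (Sum.elim (embL k) (embR k)) a))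
    w (fun a => rfl)
  rw [← this, Fintype.sum_sum_type, Fintype.sum_sum_type]
  simp

def S1 (k : ℕ) (S : Finset (Fin (2^(k+2)-1))) : Finset (Fin (2^(k+1)-1)) :=
  Finset.univ.filter fun j => embL k j ∈ S

def S2 (k : ℕ) (S : Finset (Fin (2^(k+2)-1))) : Finset (Fin (2^(k+1)-1)) :=
  Finset.univ.filter fun j => embR k j ∈ S

lemma sum_S_split (k : ℕ) (S : Finset (Fin (2^(k+2)-1))) (v : Fin (2^(k+2)-1) → ZMod 2) :
    ∑ i ∈ S, v i = (if rt k ∈ S then v (rt k) else 0)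
      + ((∑ j ∈ S1 k S, v (embL k j)) + (∑ j ∈ S2 k S, v (embR k j))) := by
  classical
  have h1 : ∑ i ∈ S, v i = ∑ i : Fin (2^(k+2)-1), if i ∈ S then v i else 0 := by
    rw [← Finset.sum_filter]
    congr 1
    ext i; simp
  rw [h1, sum_index_split k (fun i => if i ∈ S then v i else 0)]
  congr 1
  congr 1
  · rw [S1, Finset.sum_filter]
  · rw [S2, Finset.sum_filter]

lemma b2z_update_flip {m : ℕ} (z : Fin m → Bool) (j0 j : Fin m) :
    b2z (Function.update z j0 (!z j0)) j = b2z z j + (if j = j0 then 1 else 0) := by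
  rcases eq_or_ne j j0 with rfl | h
  · rw [if_pos rfl]
    simp only [b2z, Function.update_self]
    cases hz : z j <;> simp <;> try decide
  · rw [if_neg h]
    simp only [b2z, Function.update_of_ne h]
    simp

lemma update_flip_invol {m : ℕ} (z : Fin m → Bool) (j0 : Fin m) :
    Function.update (Function.update z j0 (!z j0)) j0
      (!(Function.update z j0 (!z j0)) j0) = z := by
  funext p
  rcases eq_or_ne p j0 with rfl | h
  · simp
  · rw [Function.update_of_ne h, Function.update_of_ne h]

lemma chi_sum_eq {m : ℕ} (S : Finset (Fin m)) :
    ∑ z : Fin m → Bool, chi (∑ j ∈ S, b2z z j) = if S = ∅ then ((2:ℝ)^m) else 0 := by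
  rcases eq_or_ne S ∅ with rfl | hS
  · rw [if_pos rfl]
    have : ∀ z : Fin m → Bool, chi (∑ j ∈ (∅ : Finset (Fin m)), b2z z j) = 1 := by
      intro z; rw [Finset.sum_empty, chi_zero]
    rw [Finset.sum_congr rfl (fun z _ => this z), Finset.sum_const, Finset.card_univ]
    simp [Fintype.card_fun]
  · rw [if_neg hS]
    obtain ⟨j0, hj0⟩ := Finset.nonempty_iff_ne_empty.mpr hS
    refine Finset.sum_involution
      (fun z _ => Function.update z j0 (!z j0)) ?_ ?_ (fun _ _ => Finset.mem_univ _) ?_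
    · intro z _
      have hsum : ∑ j ∈ S, b2z (Function.update z j0 (!z j0)) j
          = (∑ j ∈ S, b2z z j) + 1 := by
        rw [Finset.sum_congr rfl (fun j _ => b2z_update_flip z j0 j), Finset.sum_add_distrib]
        congr 1
        rw [Finset.sum_ite_eq' S j0 (fun _ => (1 : ZMod 2)), if_pos hj0]
      rw [hsum, chi_add_one]; ring
    · intro z _ _
      intro hz
      have h2 : Function.update z j0 (!z j0) = z := hz
      have := congrFun h2 j0
      simp only [Function.update_self] at this
      cases h : z j0 <;> rw [h] at this <;> simp at this
    · intro z _
      show Function.update (Function.update z j0 (!z j0)) j0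
        (!(Function.update z j0 (!z j0)) j0) = z
      exact update_flip_invol z j0

lemma fourier_rec (k : ℕ) (S : Finset (Fin (2^(k+2)-1))) :
    fourierCf (fTree (k+2)) S =
      ((if S2 k S = ∅ then fourierCf (fTree (k+1)) (S1 k S) else 0)
        + (if rt k ∈ S then (-1:ℝ) else 1) *
          (if S1 k S = ∅ then fourierCf (fTree (k+1)) (S2 k S) else 0)) / 2 := by
  classical
  set m := 2^(k+1) - 1 with hm
  -- pointwise term computation
  have hterm : ∀ (b : Bool) (z z' : Fin m → Bool),
      toPM (fTree (k+2)) (glue b z z') * chi (∑ i ∈ S, b2z (glue b z z') i)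
        = (if b then toPM (fTree (k+1)) z' else toPM (fTree (k+1)) z)
          * ((if rt k ∈ S then (if b then (-1:ℝ) else 1) else 1)
            * (chi (∑ j ∈ S1 k S, b2z z j) * chi (∑ j ∈ S2 k S, b2z z' j))) := by
    intro b z z'
    have h1 : toPM (fTree (k+2)) (glue b z z')
        = (if b then toPM (fTree (k+1)) z' else toPM (fTree (k+1)) z) := by
      unfold toPM
      rw [fTree_glue]
      cases b <;> simp
    have h2 : ∑ i ∈ S, b2z (glue b z z') i
        = (if rt k ∈ S then b2z (glue b z z') (rt k) else 0)
          + ((∑ j ∈ S1 k S, b2z z j) + (∑ j ∈ S2 k S, b2z z' j)) := by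
      rw [sum_S_split k S]
      congr 1
      congr 1
      · exact Finset.sum_congr rfl fun j _ => by rw [show b2z (glue b z z') (embL k j) = b2z z j from by simp [b2z, glue_embL]]
      · exact Finset.sum_congr rfl fun j _ => by rw [show b2z (glue b z z') (embR k j) = b2z z' j from by simp [b2z, glue_embR]]
    rw [h1, h2, chi_add, chi_add]
    have h3 : chi (if rt k ∈ S then b2z (glue b z z') (rt k) else 0)
        = (if rt k ∈ S then (if b then (-1:ℝ) else 1) else 1) := by
      by_cases h : rt k ∈ S
      · rw [if_pos h, if_pos h]
        simp only [b2z]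
        rw [glue_rt]
        cases b <;> simp [chi_zero, chi_one, chi]
      · rw [if_neg h, if_neg h]
        exact chi_zero
    rw [h3]
    try ring
  -- main sum computation
  rw [fourierCf_chi]
  have hsum : ∑ x : Fin (2^(k+2)-1) → Bool, toPM (fTree (k+2)) x * chi (∑ i ∈ S, b2z x i)
      = ∑ p : Bool × (Fin m → Bool) × (Fin m → Bool),
          toPM (fTree (k+2)) (glue p.1 p.2.1 p.2.2) * chi (∑ i ∈ S, b2z (glue p.1 p.2.1 p.2.2) i) := by
    refine (Fintype.sum_equiv (cubeSplit k) _ _ fun p => rfl).symm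
  rw [hsum]
  rw [Fintype.sum_prod_type]
  rw [Fintype.sum_bool]
  have htrue : ∑ p : (Fin m → Bool) × (Fin m → Bool),
      toPM (fTree (k+2)) (glue true p.1 p.2) * chi (∑ i ∈ S, b2z (glue true p.1 p.2) i)
      = (if rt k ∈ S then (-1:ℝ) else 1)
        * ((∑ z : Fin m → Bool, chi (∑ j ∈ S1 k S, b2z z j))
          * (∑ z' : Fin m → Bool, toPM (fTree (k+1)) z' * chi (∑ j ∈ S2 k S, b2z z' j))) := by
    rw [Fintype.sum_prod_type]
    rw [Finset.sum_congr rfl (fun z _ => Finset.sum_congr rfl (fun z' _ => hterm true z z'))]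
    rw [Finset.sum_mul_sum, Finset.mul_sum]
    refine Finset.sum_congr rfl fun z _ => ?_
    rw [Finset.mul_sum]
    refine Finset.sum_congr rfl fun z' _ => ?_
    split_ifs <;> try ring
    all_goals simp_all
  have hfalse : ∑ p : (Fin m → Bool) × (Fin m → Bool),
      toPM (fTree (k+2)) (glue false p.1 p.2) * chi (∑ i ∈ S, b2z (glue false p.1 p.2) i)
      = (∑ z : Fin m → Bool, toPM (fTree (k+1)) z * chi (∑ j ∈ S1 k S, b2z z j))
          * (∑ z' : Fin m → Bool, chi (∑ j ∈ S2 k S, b2z z' j)) := by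
    rw [Fintype.sum_prod_type]
    rw [Finset.sum_congr rfl (fun z _ => Finset.sum_congr rfl (fun z' _ => hterm false z z'))]
    rw [Finset.sum_mul_sum]
    refine Finset.sum_congr rfl fun z _ => ?_
    refine Finset.sum_congr rfl fun z' _ => ?_
    split_ifs <;> try ring
    all_goals simp_all
  rw [htrue, hfalse, chi_sum_eq, chi_sum_eq]
  have hF1 : ∑ z : Fin m → Bool, toPM (fTree (k+1)) z * chi (∑ j ∈ S1 k S, b2z z j)
      = (2:ℝ)^m * fourierCf (fTree (k+1)) (S1 k S) := by
    rw [fourierCf_chi]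
    rw [← mul_assoc, mul_inv_cancel₀ (by positivity), one_mul]
  have hF2 : ∑ z' : Fin m → Bool, toPM (fTree (k+1)) z' * chi (∑ j ∈ S2 k S, b2z z' j)
      = (2:ℝ)^m * fourierCf (fTree (k+1)) (S2 k S) := by
    rw [fourierCf_chi]
    rw [← mul_assoc, mul_inv_cancel₀ (by positivity), one_mul]
  rw [hF1, hF2]
  have hpow : (2:ℝ)^(2^(k+2)-1) = 2^m * 2^m * 2 := by
    rw [← pow_add, ← pow_succ]
    congr 1
    rw [hm]
    have := size2 k
    omega
  rw [hpow]
  have h2m : (2:ℝ)^m ≠ 0 := by positivity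
  split_ifs <;> field_simp <;> ring

lemma S1_empty (k : ℕ) : S1 k (∅ : Finset (Fin (2^(k+2)-1))) = ∅ := by
  simp [S1]

lemma S2_empty (k : ℕ) : S2 k (∅ : Finset (Fin (2^(k+2)-1))) = ∅ := by
  simp [S2]

lemma fin_one_elim (i : Fin (2^1-1)) : i = ⟨0, by norm_num⟩ := by
  apply Fin.ext
  have := i.isLt
  omega

def boolEquivOne : (Fin (2^1-1) → Bool) ≃ Bool :=
  { toFun := fun x => x ⟨0, by norm_num⟩
    invFun := fun b _ => b
    left_inv := by
      intro x
      funext i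
      rw [fin_one_elim i]
    right_inv := fun b => rfl }

lemma boolEquivOne_apply (x : Fin (2^1-1) → Bool) : boolEquivOne x = x ⟨0, by norm_num⟩ := rfl

lemma fourier_one_empty : fourierCf (fTree 1) (∅ : Finset (Fin (2^1-1))) = 0 := by
  unfold fourierCf
  have hsum : ∑ x : Fin (2^1-1) → Bool, toPM (fTree 1) x
      * ∏ i ∈ (∅ : Finset (Fin (2^1-1))), (if x i then (-1:ℝ) else 1) = 0 := by
    rw [Fintype.sum_equiv boolEquivOne _ (fun b => toPM (fTree 1) (fun _ => b)) ?_]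
    · rw [Fintype.sum_bool]
      unfold toPM
      have h1 : fTree 1 (fun _ : Fin (2^1-1) => true) = true := rfl
      have h2 : fTree 1 (fun _ : Fin (2^1-1) => false) = false := rfl
      rw [h1, h2]
      norm_num
    · intro x
      rw [Finset.prod_empty, mul_one]
      show toPM (fTree 1) x = toPM (fTree 1) (fun _ => boolEquivOne x)
      have hx : (fun _ : Fin (2^1-1) => boolEquivOne x) = x := by
        funext i
        rw [fin_one_elim i, boolEquivOne_apply]
      rw [hx]
  rw [hsum]
  ring

lemma fourier_empty : ∀ k : ℕ, fourierCf (fTree (k+1)) ∅ = 0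
  | 0 => fourier_one_empty
  | (k+1) => by
    rw [fourier_rec, S1_empty, S2_empty]
    simp [fourier_empty k]

lemma sp_bound : ∀ k : ℕ, sparsity (fTree (k+1)) ≤ 4^k
  | 0 => by
    unfold sparsity
    have hsub : Finset.univ.filter (fun S : Finset (Fin (2^1-1)) => fourierCf (fTree 1) S ≠ 0)
        ⊆ Finset.univ.erase ∅ := by
      intro S hS
      rw [Finset.mem_filter] at hS
      rw [Finset.mem_erase]
      refine ⟨?_, Finset.mem_univ _⟩
      intro h
      exact hS.2 (h ▸ fourier_empty 0)
    calc (Finset.univ.filter _).card ≤ (Finset.univ.erase ∅).card := Finset.card_le_card hsub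
      _ = Fintype.card (Finset (Fin (2^1-1))) - 1 := by
          rw [Finset.card_erase_of_mem (Finset.mem_univ _), Finset.card_univ]
      _ ≤ 4^0 := by
          rw [Fintype.card_finset]
          norm_num
  | (k+1) => by
    classical
    set F := fTree (k+1) with hF
    set suppF := Finset.univ.filter (fun T : Finset (Fin (2^(k+1)-1)) => fourierCf F T ≠ 0)
      with hsuppF
    have hempty : (∅ : Finset (Fin (2^(k+1)-1))) ∉ suppF := by
      rw [hsuppF, Finset.mem_filter]
      push_neg
      intro _
      simpa using fourier_empty k
    unfold sparsity
    have hmain : (Finset.univ.filter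
        (fun S : Finset (Fin (2^(k+2)-1)) => fourierCf (fTree (k+2)) S ≠ 0)).card
        ≤ (Finset.univ ×ˢ ((suppF ×ˢ ({∅} : Finset (Finset (Fin (2^(k+1)-1)))))
            ∪ (({∅} : Finset (Finset (Fin (2^(k+1)-1)))) ×ˢ suppF)) :
          Finset (Bool × Finset (Fin (2^(k+1)-1)) × Finset (Fin (2^(k+1)-1)))).card := by
      refine Finset.card_le_card_of_injOn
        (fun S => (decide (rt k ∈ S), S1 k S, S2 k S)) ?_ ?_
      · intro S hS
        rw [Finset.mem_coe, Finset.mem_filter] at hS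
        have hne := hS.2
        rw [fourier_rec] at hne
        rw [Finset.mem_coe, Finset.mem_product]
        refine ⟨Finset.mem_univ _, ?_⟩
        rw [Finset.mem_union]
        by_cases h2 : S2 k S = ∅
        · left
          rw [Finset.mem_product]
          refine ⟨?_, by simp [h2]⟩
          rw [hsuppF, Finset.mem_filter]
          refine ⟨Finset.mem_univ _, ?_⟩
          by_cases h1 : S1 k S = ∅
          · exfalso
            apply hne
            simp [h1, h2, fourier_empty k]
          · intro hzero
            apply hne
            rw [if_pos h2, if_neg h1, hzero]
            simp
        · right
          rw [Finset.mem_product]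
          by_cases h1 : S1 k S = ∅
          · refine ⟨by simp [h1], ?_⟩
            rw [hsuppF, Finset.mem_filter]
            refine ⟨Finset.mem_univ _, ?_⟩
            intro hzero
            apply hne
            rw [if_neg h2, if_pos h1, hzero]
            simp
          · exfalso
            apply hne
            rw [if_neg h2, if_neg h1]
            simp
      · intro S hS S' hS' h
        simp only [Prod.mk.injEq] at h
        obtain ⟨ha, hb, hc⟩ := h
        ext i
        rcases index_cases k i with rfl | ⟨j, rfl⟩ | ⟨j, rfl⟩
        · constructor <;> intro hm
          · exact of_decide_eq_true (ha ▸ decide_eq_true hm)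
          · exact of_decide_eq_true (ha.symm ▸ decide_eq_true hm)
        · have : (j ∈ S1 k S) = (j ∈ S1 k S') := by rw [hb]
          simpa [S1] using this
        · have : (j ∈ S2 k S) = (j ∈ S2 k S') := by rw [hc]
          simpa [S2] using this
    refine le_trans hmain ?_
    have hdisj : Disjoint (suppF ×ˢ ({∅} : Finset (Finset (Fin (2^(k+1)-1)))))
        (({∅} : Finset (Finset (Fin (2^(k+1)-1)))) ×ˢ suppF) := by
      rw [Finset.disjoint_left]
      rintro ⟨a, b⟩ hab hab'
      rw [Finset.mem_product] at hab hab'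
      have : a = ∅ := by simpa using hab'.1
      exact hempty (this ▸ hab.1)
    rw [Finset.card_product, Finset.card_union_of_disjoint hdisj,
      Finset.card_product, Finset.card_product]
    simp only [Finset.card_singleton, Finset.card_univ, Fintype.card_bool,
      mul_one, one_mul]
    have hsp : suppF.card = sparsity (fTree (k+1)) := rfl
    have hb := sp_bound k
    have h4 : (4:ℕ)^(k+1) = 4^k * 4 := pow_succ 4 k
    omega

theorem stmt12 (k : ℕ) (hk : 2 ≤ k) :
    ∃ L : (Fin (2 ^ k - 1) → ZMod 2) ≃ₗ[ZMod 2] (Fin (2 ^ k - 1) → ZMod 2),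
      Real.sqrt (sparsity (fun x => fTree k (z2b (L (b2z x)))))
        ≤ 2 * ((sens (fun x => fTree k (z2b (L (b2z x)))) : ℝ) + 1) := by
  obtain ⟨j, rfl⟩ : ∃ j, k = j + 1 := ⟨k - 1, by omega⟩
  refine ⟨Lequiv (j+1), ?_⟩
  set g : (Fin (2^(j+1)-1) → Bool) → Bool :=
    fun x => fTree (j+1) (z2b ((Lequiv (j+1)) (b2z x))) with hg
  have hsp : sparsity g ≤ 4^j :=
    le_trans (sparsity_comp_le (fTree (j+1)) (Lequiv (j+1))) (sp_bound j)
  have hsens : 2^j ≤ sens g := sens_lower j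
  have hc : ((sparsity g : ℝ)) ≤ ((2:ℝ)^j)^2 := by
    have h2 : ((2:ℝ)^j)^2 = (4:ℝ)^j := by
      rw [← pow_mul, mul_comm, pow_mul]
      norm_num
    rw [h2]
    calc ((sparsity g : ℝ)) ≤ ((4^j : ℕ) : ℝ) := by exact_mod_cast hsp
      _ = (4:ℝ)^j := by push_cast; ring
  have hs1 : Real.sqrt (sparsity g) ≤ (2:ℝ)^j := by
    calc Real.sqrt (sparsity g) ≤ Real.sqrt (((2:ℝ)^j)^2) := Real.sqrt_le_sqrt hc
      _ = (2:ℝ)^j := Real.sqrt_sq (by positivity)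
  have hs2 : (2:ℝ)^j ≤ (sens g : ℝ) := by exact_mod_cast hsens
  calc Real.sqrt (sparsity g) ≤ (2:ℝ)^j := hs1
    _ ≤ 2 * ((sens g : ℝ) + 1) := by nlinarith [hs2]
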